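/- Let C be an even binary (2^m - 3, 2^{2^m-m-4}, 4) code and define E = {x ∈ F_2^n : d(x, complement of C) ≥ 3, wt(x) even} and Ē = {x ∈ F_2^n : d(x, C) ≥ 3, wt(x) odd}. Then the average number over x ∈ Ē of neighbors of x (words at Hamming distance 1) lying in E equals 1; that is, |{(x,y) : x ∈ Ē, y ∈ E, d(x,y) = 1}| = |Ē|. -/

import Mathlib

open Finset

namespace Stmt16Aux

variable {n : ℕ}

def chi : ZMod 2 → ℤ := fun a => if a = 0 then 1 else -1

lemma chi_zero : chi 0 = 1 := rfl
lemma chi_add (a b : ZMod 2) : chi (a + b) = chi a * chi b := by revert a b; decide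
lemma chi_sum {ι : Type*} (s : Finset ι) (f : ι → ZMod 2) :
    chi (∑ i ∈ s, f i) = ∏ i ∈ s, chi (f i) := by
  induction s using Finset.cons_induction with
  | empty => simp [chi_zero]
  | cons a s ha ih => rw [Finset.sum_cons, Finset.prod_cons, chi_add, ih]

def dot (v u : Fin n → ZMod 2) : ZMod 2 := ∑ i, v i * u i

def ev (i : Fin n) : Fin n → ZMod 2 := fun k => if k = i then 1 else 0

def sgn (v : Fin n → ZMod 2) : ℤ := ∏ i, chi (v i)

def sInt (v : Fin n → ZMod 2) : ℤ := ∑ i, chi (v i)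

lemma dot_add_right (v a b : Fin n → ZMod 2) : dot v (a + b) = dot v a + dot v b := by
  simp [dot, mul_add, Finset.sum_add_distrib]

lemma dot_ev (v : Fin n → ZMod 2) (i : Fin n) : dot v (ev i) = v i := by
  simp only [dot, ev]
  rw [Finset.sum_eq_single i] <;> simp +contextual

lemma dot_sum_right {ι : Type*} (v : Fin n → ZMod 2) (s : Finset ι) (f : ι → Fin n → ZMod 2) :
    dot v (∑ r ∈ s, f r) = ∑ r ∈ s, dot v (f r) := by
  induction s using Finset.cons_induction with
  | empty => simp [dot]
  | cons a s ha ih => rw [Finset.sum_cons, Finset.sum_cons, dot_add_right, ih]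

lemma dot_one (v : Fin n → ZMod 2) : chi (dot v 1) = sgn v := by
  simp only [dot, sgn, Pi.one_apply, mul_one]
  exact chi_sum _ _

lemma ortho (u : Fin n → ZMod 2) :
    ∑ v : Fin n → ZMod 2, chi (dot v u) = if u = 0 then 2 ^ n else 0 := by
  have h1 : ∀ v : Fin n → ZMod 2, chi (dot v u) = ∏ i, chi (v i * u i) := fun v => chi_sum _ _
  simp only [h1]
  rw [← Fintype.piFinset_univ,
    ← Finset.prod_univ_sum (t := fun _ : Fin n => (univ : Finset (ZMod 2)))
      (f := fun i a => chi (a * u i))]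
  have h2 : ∀ b : ZMod 2, (∑ a : ZMod 2, chi (a * b)) = if b = 0 then 2 else 0 := by decide
  simp only [h2]
  by_cases hu : u = 0
  · subst hu; simp
  · rw [if_neg hu]
    obtain ⟨i, hi⟩ : ∃ i, u i ≠ 0 := by
      by_contra h; push_neg at h; exact hu (funext h)
    exact Finset.prod_eq_zero (Finset.mem_univ i) (by simp [hi])


lemma sub_eq_add' (x y : Fin n → ZMod 2) : x - y = x + y := by
  funext i
  simp only [Pi.sub_apply, Pi.add_apply]
  generalize x i = a; generalize y i = b
  revert a b; decide

lemma hdist_eq (x y : Fin n → ZMod 2) : hammingDist x y = hammingNorm (x + y) := by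
  rw [hammingDist_eq_hammingNorm, neg_add_eq_sub, Stmt16Aux.sub_eq_add', add_comm]

lemma sgn_spec (v : Fin n → ZMod 2) : sgn v = (-1 : ℤ) ^ hammingNorm v := by
  unfold sgn hammingNorm chi
  rw [← Finset.prod_filter_mul_prod_filter_not Finset.univ (fun i => v i = 0)]
  rw [Finset.prod_congr rfl (fun i hi => if_pos (Finset.mem_filter.mp hi).2),
    Finset.prod_congr rfl (fun i (hi : i ∈ Finset.filter _ _) =>
      if_neg (Finset.mem_filter.mp hi).2)]
  simp

lemma sgn_add (a b : Fin n → ZMod 2) : sgn (a + b) = sgn a * sgn b := by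
  unfold sgn
  rw [← Finset.prod_mul_distrib]
  exact Finset.prod_congr rfl fun i _ => chi_add _ _

lemma sgn_vals (v : Fin n → ZMod 2) : sgn v = 1 ∨ sgn v = -1 := by
  rw [sgn_spec]; rcases Nat.even_or_odd (hammingNorm v) with h | h
  · left; exact h.neg_one_pow
  · right; exact h.neg_one_pow

lemma sgn_eq_one_iff (v : Fin n → ZMod 2) : sgn v = 1 ↔ Even (hammingNorm v) := by
  rw [sgn_spec, neg_one_pow_eq_one_iff_even]; norm_num

lemma sgn_eq_neg_one_iff (v : Fin n → ZMod 2) : sgn v = -1 ↔ Odd (hammingNorm v) := by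
  rcases Nat.even_or_odd (hammingNorm v) with h | h
  · constructor
    · intro h1
      rw [sgn_spec, h.neg_one_pow] at h1; norm_num at h1
    · intro h1; exact absurd h1 (Nat.not_odd_iff_even.mpr h)
  · simp [sgn_spec, h.neg_one_pow, h]

lemma sInt_spec (v : Fin n → ZMod 2) : sInt v = (n : ℤ) - 2 * hammingNorm v := by
  unfold sInt chi hammingNorm
  rw [← Finset.sum_filter_add_sum_filter_not Finset.univ (fun i => v i = 0)]
  rw [Finset.sum_congr rfl (fun i hi => if_pos (Finset.mem_filter.mp hi).2),
    Finset.sum_congr rfl (fun i (hi : i ∈ Finset.filter _ _) =>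
      if_neg (Finset.mem_filter.mp hi).2)]
  simp only [Finset.sum_const, nsmul_eq_mul, mul_one, mul_neg]
  have := Finset.card_filter_add_card_filter_not (s := (Finset.univ : Finset (Fin n)))
    (p := fun i => v i = 0)
  simp only [Finset.card_univ, Fintype.card_fin] at this
  push_cast [← this]
  ring

lemma hnorm_ev (i : Fin n) : hammingNorm (ev i) = 1 := by
  unfold hammingNorm ev
  rw [show Finset.filter (fun k => (if k = i then (1 : ZMod 2) else 0) ≠ 0) Finset.univ = {i} by
    ext k; by_cases h : k = i <;> simp [h]]
  simp

lemma hnorm_add_le (x y : Fin n → ZMod 2) :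
    hammingNorm (x + y) ≤ hammingNorm x + hammingNorm y := by
  have h := hammingDist_triangle (x + y) y (0 : Fin n → ZMod 2)
  simp only [hammingDist_zero_right] at h
  rw [hammingDist_eq_hammingNorm, neg_add_eq_sub, Stmt16Aux.sub_eq_add', add_comm y (x + y)] at h
  have : x + y + y = x := by
    funext i
    simp only [Pi.add_apply]
    generalize x i = a; generalize y i = b; revert a b; decide
  rwa [this] at h

lemma hnorm_add_one (v : Fin n → ZMod 2) : hammingNorm (v + 1) + hammingNorm v = n := by
  unfold hammingNorm
  have h1 : Finset.filter (fun i => (v + 1) i ≠ 0) Finset.univ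
      = Finset.filter (fun i => ¬ v i ≠ 0) Finset.univ := by
    ext i
    simp only [Pi.add_apply, Pi.one_apply, Finset.mem_filter, Finset.mem_univ, true_and]
    generalize v i = a; revert a; decide
  rw [h1, add_comm]
  have := Finset.card_filter_add_card_filter_not (s := (Finset.univ : Finset (Fin n)))
    (p := fun i => v i ≠ 0)
  simpa using this

lemma ev_inj {i k : Fin n} (h : ev i = ev k) : i = k := by
  by_contra hne
  have := congrFun h i
  simp [ev, hne] at this

lemma add_self_zero (x : Fin n → ZMod 2) : x + x = 0 := by
  funext i
  simp only [Pi.add_apply, Pi.zero_apply]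
  generalize x i = a; revert a; decide


def S (C : Finset (Fin n → ZMod 2)) (v : Fin n → ZMod 2) : ℤ := ∑ c ∈ C, chi (dot v c)

lemma S_sq (C : Finset (Fin n → ZMod 2)) (v : Fin n → ZMod 2) :
    (S C v) ^ 2 = ∑ p ∈ C ×ˢ C, chi (dot v (p.1 + p.2)) := by
  rw [sq, S, Finset.sum_mul_sum, Finset.sum_product]
  exact Finset.sum_congr rfl fun c _ => Finset.sum_congr rfl fun c' _ => by
    rw [← chi_add, ← dot_add_right]

lemma sInt_pow (j : ℕ) (v : Fin n → ZMod 2) :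
    (sInt v) ^ j = ∑ g : Fin j → Fin n, chi (dot v (∑ r, ev (g r))) := by
  have h1 : sInt v = ∑ i, chi (dot v (ev i)) := by
    unfold sInt; exact Finset.sum_congr rfl fun i _ => by rw [dot_ev]
  calc (sInt v) ^ j = ∏ _r : Fin j, ∑ i, chi (dot v (ev i)) := by
        rw [Finset.prod_const, Finset.card_univ, Fintype.card_fin, h1]
    _ = ∑ g ∈ Fintype.piFinset (fun _ : Fin j => (Finset.univ : Finset (Fin n))),
          ∏ r, chi (dot v (ev (g r))) :=
        Finset.prod_univ_sum (t := fun _ : Fin j => (Finset.univ : Finset (Fin n)))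
          (f := fun _ i => chi (dot v (ev i)))
    _ = ∑ g : Fin j → Fin n, chi (dot v (∑ r, ev (g r))) := by
        rw [Fintype.piFinset_univ]
        exact Finset.sum_congr rfl fun g _ => by rw [← chi_sum, ← dot_sum_right]

lemma master (C : Finset (Fin n → ZMod 2)) (j : ℕ) (t : Fin n → ZMod 2) :
    ∑ v : Fin n → ZMod 2, (S C v) ^ 2 * (sInt v) ^ j * chi (dot v t)
    = 2 ^ n * ((((C ×ˢ C) ×ˢ (Finset.univ : Finset (Fin j → Fin n))).filter
        (fun p => p.1.1 + p.1.2 + t + ∑ r, ev (p.2 r) = 0)).card : ℤ) := by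
  have key : ∀ v : Fin n → ZMod 2, (S C v) ^ 2 * (sInt v) ^ j * chi (dot v t)
      = ∑ p ∈ (C ×ˢ C) ×ˢ (Finset.univ : Finset (Fin j → Fin n)),
          chi (dot v (p.1.1 + p.1.2 + t + ∑ r, ev (p.2 r))) := by
    intro v
    conv_rhs => rw [Finset.sum_product]
    rw [S_sq, sInt_pow, Finset.sum_mul_sum, Finset.sum_mul]
    refine Finset.sum_congr rfl fun p _ => ?_
    rw [Finset.sum_mul]
    refine Finset.sum_congr rfl fun g _ => ?_
    rw [← chi_add, ← chi_add, ← dot_add_right, ← dot_add_right]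
    congr 2
    ring
  simp only [key]
  rw [Finset.sum_comm]
  have h2 : ∀ p : ((Fin n → ZMod 2) × (Fin n → ZMod 2)) × (Fin j → Fin n),
      ∑ v : Fin n → ZMod 2, chi (dot v (p.1.1 + p.1.2 + t + ∑ r, ev (p.2 r)))
      = if p.1.1 + p.1.2 + t + ∑ r, ev (p.2 r) = 0 then (2 : ℤ) ^ n else 0 :=
    fun p => ortho _
  rw [Finset.sum_congr rfl fun p _ => h2 p, Finset.sum_ite, Finset.sum_const,
    Finset.sum_const_zero, add_zero, nsmul_eq_mul, mul_comm]


lemma eq_of_add_eq_zero {x y : Fin n → ZMod 2} (h : x + y = 0) : x = y := by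
  have h2 : x + y + y = 0 + y := by rw [h]
  rwa [add_assoc, add_self_zero, add_zero, zero_add] at h2

lemma add_eq_zero_iff' {x y : Fin n → ZMod 2} : x + y = 0 ↔ x = y :=
  ⟨eq_of_add_eq_zero, fun h => by rw [h, add_self_zero]⟩

lemma sgn_sum_ev {j : ℕ} (g : Fin j → Fin n) : sgn (∑ r, ev (g r)) = (-1 : ℤ) ^ j := by
  have h1 : ∀ (s : Finset (Fin j)), sgn (∑ r ∈ s, ev (g r)) = (-1 : ℤ) ^ s.card := by
    intro s
    induction s using Finset.cons_induction with
    | empty => simp [sgn, chi_zero]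
    | cons a s ha ih =>
        rw [Finset.sum_cons, sgn_add, ih, Finset.card_cons, sgn_spec, hnorm_ev]
        ring
  rw [h1, Finset.card_univ, Fintype.card_fin]

section Code

variable (C : Finset (Fin n → ZMod 2))

def cnt (j : ℕ) (t : Fin n → ZMod 2) : ℕ :=
  (((C ×ˢ C) ×ˢ (Finset.univ : Finset (Fin j → Fin n))).filter
    (fun p => p.1.1 + p.1.2 + t + ∑ r, ev (p.2 r) = 0)).card

lemma master' (j : ℕ) (t : Fin n → ZMod 2) :
    ∑ v : Fin n → ZMod 2, (S C v) ^ 2 * (sInt v) ^ j * chi (dot v t)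
      = 2 ^ n * (cnt C j t : ℤ) := master C j t

variable {C}

lemma sgn_mem (heven : ∀ c ∈ C, Even (hammingNorm c)) {c : Fin n → ZMod 2} (hc : c ∈ C) :
    sgn c = 1 := by
  rw [sgn_eq_one_iff]; exact heven c hc

lemma cnt_zero (heven : ∀ c ∈ C, Even (hammingNorm c)) (j : ℕ) (t : Fin n → ZMod 2)
    (ht : sgn t * (-1 : ℤ) ^ j = -1) :
    cnt C j t = 0 := by
  rw [cnt, Finset.card_eq_zero, Finset.filter_eq_empty_iff]
  rintro ⟨⟨c, c'⟩, g⟩ hp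
  simp only [Finset.mem_product, Finset.mem_univ, and_true] at hp
  intro h
  have h1 := congrArg sgn h
  simp only at h1 h
  rw [sgn_add, sgn_add, sgn_add, sgn_mem heven hp.1, sgn_mem heven hp.2,
    sgn_sum_ev] at h1
  have h0 : sgn (0 : Fin n → ZMod 2) = 1 := by simp [sgn, chi_zero]
  rw [h0] at h1
  rw [one_mul, one_mul, ht] at h1
  norm_num at h1

lemma cancel_pair (hdist : ∀ c ∈ C, ∀ c' ∈ C, c ≠ c' → 4 ≤ hammingDist c c')
    {c c' : Fin n → ZMod 2} (hc : c ∈ C) (hc' : c' ∈ C) {a b : Fin n}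
    (h : c + ev a = c' + ev b) : c = c' ∧ a = b := by
  have hsum : c + c' = ev a + ev b := by
    apply eq_of_add_eq_zero
    have h2 : c + c' + (ev a + ev b) = (c + ev a) + (c' + ev b) := by ring
    rw [h2, h, add_self_zero]
  by_cases hcc : c = c'
  · subst hcc
    refine ⟨rfl, ?_⟩
    have h3 : ev a + ev b = 0 := by rw [← hsum, add_self_zero]
    exact ev_inj (eq_of_add_eq_zero h3)
  · exfalso
    have h4 := hdist c hc c' hc' hcc
    rw [hdist_eq, hsum] at h4
    have := le_trans h4 (le_trans (hnorm_add_le (ev a) (ev b)) (by rw [hnorm_ev, hnorm_ev]))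
    omega

lemma cnt00 : cnt C 0 0 = C.card := by
  rw [cnt]
  rw [show (((C ×ˢ C) ×ˢ (Finset.univ : Finset (Fin 0 → Fin n))).filter
      (fun p => p.1.1 + p.1.2 + 0 + ∑ r, ev (p.2 r) = 0))
      = C.image (fun c => ((c, c), (fun r => r.elim0 : Fin 0 → Fin n))) by
    ext ⟨⟨c, c'⟩, g⟩
    simp only [Finset.mem_filter, Finset.mem_product, Finset.mem_univ, and_true,
      Finset.mem_image]
    constructor
    · rintro ⟨⟨h1, h2⟩, h3⟩
      rw [Finset.univ_eq_empty, Finset.sum_empty, add_zero, add_zero] at h3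
      have hcc := eq_of_add_eq_zero h3
      subst hcc
      refine ⟨c, h1, ?_⟩
      have hg : (fun r => r.elim0 : Fin 0 → Fin n) = g := by funext r; exact r.elim0
      rw [hg]
    · rintro ⟨a, ha, hh⟩
      obtain ⟨h1, h2⟩ := Prod.mk.injEq .. ▸ hh
      obtain ⟨h3, h4⟩ := Prod.mk.injEq .. ▸ h1
      subst h3; subst h4
      refine ⟨⟨ha, ha⟩, ?_⟩
      rw [Finset.univ_eq_empty, Finset.sum_empty, add_zero, add_zero, add_self_zero]]
  rw [Finset.card_image_of_injective]
  intro a b hab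
  exact (Prod.ext_iff.mp (Prod.ext_iff.mp hab).1).1


lemma cnt20 (hdist : ∀ c ∈ C, ∀ c' ∈ C, c ≠ c' → 4 ≤ hammingDist c c') :
    cnt C 2 0 = n * C.card := by
  rw [cnt]
  rw [show (((C ×ˢ C) ×ˢ (Finset.univ : Finset (Fin 2 → Fin n))).filter
      (fun p => p.1.1 + p.1.2 + 0 + ∑ r, ev (p.2 r) = 0))
      = (C ×ˢ (Finset.univ : Finset (Fin n))).image
          (fun q => ((q.1, q.1), (fun _ => q.2 : Fin 2 → Fin n))) by
    ext ⟨⟨c, c'⟩, g⟩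
    simp only [Finset.mem_filter, Finset.mem_product, Finset.mem_univ, and_true,
      Finset.mem_image]
    constructor
    · rintro ⟨⟨h1, h2⟩, h3⟩
      simp only [Fin.sum_univ_two] at h3
      have h4 : c + ev (g 0) = c' + ev (g 1) := by
        apply eq_of_add_eq_zero
        have : c + ev (g 0) + (c' + ev (g 1)) = c + c' + 0 + (ev (g 0) + ev (g 1)) := by ring
        rw [this, h3]
      obtain ⟨hcc, hg⟩ := cancel_pair hdist h1 h2 h4
      refine ⟨(c, g 0), h1, ?_⟩
      subst hcc
      have : (fun _ => g 0 : Fin 2 → Fin n) = g := by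
        funext r
        fin_cases r
        · rfl
        · exact hg
      rw [this]
    · rintro ⟨⟨a, i⟩, ha, hh⟩
      obtain ⟨h1, h2⟩ := Prod.mk.injEq .. ▸ hh
      obtain ⟨h3, h4⟩ := Prod.mk.injEq .. ▸ h1
      subst h3; subst h4; subst h2
      refine ⟨⟨ha, ha⟩, ?_⟩
      simp only [Fin.sum_univ_two]
      have hz : ∀ (x y : Fin n → ZMod 2), x + x + 0 + (y + y) = 0 := by
        intro x y
        simp [add_self_zero]
      exact hz _ _]
  rw [Finset.card_image_of_injective, Finset.card_product, Finset.card_univ, Fintype.card_fin,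
    mul_comm]
  rintro ⟨a, i⟩ ⟨b, k⟩ hab
  simp only [Prod.mk.injEq] at hab
  obtain ⟨⟨h1, _⟩, h2⟩ := hab
  exact Prod.ext h1 (congrFun h2 0)

lemma Q1_le (hdist : ∀ c ∈ C, ∀ c' ∈ C, c ≠ c' → 4 ≤ hammingDist c c') :
    cnt C 1 1 ≤ C.card := by
  rw [cnt]
  apply Finset.card_le_card_of_injOn (fun p => p.1.1)
  · rintro ⟨⟨c, c'⟩, g⟩ hp
    simp only [Finset.mem_coe, Finset.mem_filter, Finset.mem_product] at hp
    exact hp.1.1.1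
  · rintro ⟨⟨c, c'⟩, g⟩ hp ⟨⟨d, d'⟩, g'⟩ hq hcd
    simp only [Finset.mem_coe, Finset.mem_filter, Finset.mem_product, Finset.mem_univ,
      and_true] at hp hq
    subst hcd
    have key : ∀ (x y : Fin n → ZMod 2) (gg : Fin 1 → Fin n),
        x + y + 1 + ∑ r, ev (gg r) = 0 → y + ev (gg 0) = x + 1 := by
      intro x y gg h
      apply eq_of_add_eq_zero
      have h2 : y + ev (gg 0) + (x + 1) = x + y + 1 + ∑ r, ev (gg r) := by
        rw [Fin.sum_univ_one]; ring
      rw [h2, h]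
    have e1 := key _ _ _ hp.2
    have e2 := key _ _ _ hq.2
    obtain ⟨hcc, hgg⟩ := cancel_pair hdist hp.1.2 hq.1.2 (e1.trans e2.symm)
    refine Prod.ext (Prod.ext rfl hcc) ?_
    funext r
    have : r = 0 := Subsingleton.elim _ _
    rw [this]; exact hgg


lemma dot_zero_right (v : Fin n → ZMod 2) : dot v 0 = 0 := by simp [dot]

lemma sgn_zero : sgn (0 : Fin n → ZMod 2) = 1 := by simp [sgn, chi_zero]

lemma sInt_zero : sInt (0 : Fin n → ZMod 2) = n := by simp [sInt, chi_zero]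

lemma sgn_one' (hodd : Odd n) : sgn (1 : Fin n → ZMod 2) = -1 := by
  unfold sgn
  rw [Finset.prod_congr rfl (fun i _ => show chi ((1 : Fin n → ZMod 2) i) = -1 from rfl)]
  rw [Finset.prod_const, Finset.card_univ, Fintype.card_fin]
  exact hodd.neg_one_pow

lemma S_zero : S C (0 : Fin n → ZMod 2) = C.card := by
  unfold S
  rw [Finset.sum_congr rfl (fun c _ => by rw [show dot (0 : Fin n → ZMod 2) c = 0 by simp [dot],
    chi_zero])]
  simp

lemma cubic_ub {s N : ℤ} (h13 : 13 ≤ N) (hs : s % 4 = 1) (h2 : s ≤ N - 4) :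
    0 ≤ -((s - 1) * (s + 3) * (s - (N - 4))) := by
  rcases (by omega : 1 ≤ s ∨ s ≤ -3) with h | h
  · have := mul_nonneg (mul_nonneg (by linarith : (0:ℤ) ≤ s - 1) (by linarith : (0:ℤ) ≤ s + 3))
      (by linarith : (0:ℤ) ≤ N - 4 - s)
    nlinarith [this]
  · have := mul_nonneg (mul_nonneg (by linarith : (0:ℤ) ≤ 1 - s) (by linarith : (0:ℤ) ≤ -3 - s))
      (by linarith : (0:ℤ) ≤ N - 4 - s)
    nlinarith [this]

lemma cubic_lb {s N : ℤ} (h13 : 13 ≤ N) (hs : s % 4 = 1) (h1 : 2 - N ≤ s) :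
    0 ≤ (s - 1) * (s + 3) * (s + (N - 2)) := by
  rcases (by omega : 1 ≤ s ∨ s ≤ -3) with h | h
  · have := mul_nonneg (mul_nonneg (by linarith : (0:ℤ) ≤ s - 1) (by linarith : (0:ℤ) ≤ s + 3))
      (by linarith : (0:ℤ) ≤ s + (N - 2))
    nlinarith [this]
  · have := mul_nonneg (mul_nonneg (by linarith : (0:ℤ) ≤ 1 - s) (by linarith : (0:ℤ) ≤ -3 - s))
      (by linarith : (0:ℤ) ≤ s + (N - 2))
    nlinarith [this]

set_option maxHeartbeats 1000000 in
lemma Q3_eq (hn13 : 13 ≤ n) (hn4 : n % 4 = 1)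
    (heven : ∀ c ∈ C, Even (hammingNorm c))
    (hdist : ∀ c ∈ C, ∀ c' ∈ C, c ≠ c' → 4 ≤ hammingDist c c')
    (hpow : (2:ℤ) ^ n = 2 * ((n:ℤ) + 3) * (C.card : ℤ)) (hKpos : 0 < C.card) :
    (cnt C 3 1 : ℤ) = ((n:ℤ) ^ 2 - 3 * (n:ℤ) + 3) * (C.card : ℤ) := by
  have hnodd : Odd n := by
    rcases Nat.even_or_odd n with h | h
    · exfalso; obtain ⟨k, hk⟩ := h; omega
    · exact h
  set K : ℤ := (C.card : ℤ) with hK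
  set N1 : ℤ := (cnt C 1 1 : ℤ) with hN1def
  set N3 : ℤ := (cnt C 3 1 : ℤ) with hN3def
  have hN1K : N1 ≤ K := by
    simp only [hN1def, hK]
    exact_mod_cast Q1_le hdist
  have hN1nn : 0 ≤ N1 := Int.natCast_nonneg _
  have hKpos' : (0:ℤ) < K := by
    simp only [hK]
    exact_mod_cast hKpos
  have hnz : (13:ℤ) ≤ (n:ℤ) := by exact_mod_cast hn13
  -- vanishing counts
  have z10 : cnt C 1 0 = 0 := cnt_zero heven 1 0 (by rw [sgn_zero]; ring)
  have z30 : cnt C 3 0 = 0 := cnt_zero heven 3 0 (by rw [sgn_zero]; ring)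
  have z01 : cnt C 0 1 = 0 := cnt_zero heven 0 1 (by rw [sgn_one' hnodd]; ring)
  have z21 : cnt C 2 1 = 0 := cnt_zero heven 2 1 (by rw [sgn_one' hnodd]; ring)
  have M00 := master' C 0 0
  have M10 := master' C 1 0
  have M20 := master' C 2 0
  have M30 := master' C 3 0
  have M01 := master' C 0 1
  have M11 := master' C 1 1
  have M21 := master' C 2 1
  have M31 := master' C 3 1
  rw [cnt00] at M00
  rw [z10, Nat.cast_zero, mul_zero] at M10
  rw [cnt20 hdist] at M20
  rw [z30, Nat.cast_zero, mul_zero] at M30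
  rw [z01, Nat.cast_zero, mul_zero] at M01
  rw [z21, Nat.cast_zero, mul_zero] at M21
  -- generic expansion
  have EXP : ∀ a3 a2 a1 a0 : ℤ,
      ∑ v : Fin n → ZMod 2,
        (S C v) ^ 2 * (1 + sgn v) * (a3 * (sInt v)^3 + a2 * (sInt v)^2 + a1 * (sInt v) + a0)
      = a3 * (0 + 2 ^ n * N3) + a2 * (2 ^ n * ((n : ℤ) * K) + 0)
        + a1 * (0 + 2 ^ n * N1) + a0 * (2 ^ n * K + 0) := by
    intro a3 a2 a1 a0
    have step : ∀ v : Fin n → ZMod 2,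
        (S C v) ^ 2 * (1 + sgn v) * (a3 * (sInt v)^3 + a2 * (sInt v)^2 + a1 * (sInt v) + a0)
        = a3 * ((S C v)^2 * (sInt v)^3 * chi (dot v 0) + (S C v)^2 * (sInt v)^3 * chi (dot v 1))
          + a2 * ((S C v)^2 * (sInt v)^2 * chi (dot v 0) + (S C v)^2 * (sInt v)^2 * chi (dot v 1))
          + a1 * ((S C v)^2 * (sInt v)^1 * chi (dot v 0) + (S C v)^2 * (sInt v)^1 * chi (dot v 1))
          + a0 * ((S C v)^2 * (sInt v)^0 * chi (dot v 0) + (S C v)^2 * (sInt v)^0 * chi (dot v 1)) := by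
      intro v
      rw [dot_one, dot_zero_right, chi_zero]
      ring
    rw [Finset.sum_congr rfl (fun v _ => step v)]
    rw [Finset.sum_add_distrib, Finset.sum_add_distrib, Finset.sum_add_distrib,
      ← Finset.mul_sum, ← Finset.mul_sum, ← Finset.mul_sum, ← Finset.mul_sum,
      Finset.sum_add_distrib, Finset.sum_add_distrib, Finset.sum_add_distrib,
      Finset.sum_add_distrib]
    rw [M00, M10, M20, M30, M01, M11, M21, M31]
    push_cast
    ring
  -- pointwise facts
  have sfacts : ∀ v : Fin n → ZMod 2, v ≠ 0 → sgn v = 1 →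
      (sInt v) % 4 = 1 ∧ 2 - (n:ℤ) ≤ sInt v ∧ sInt v ≤ (n:ℤ) - 4 := by
    intro v hv hsv
    have hev : Even (hammingNorm v) := (sgn_eq_one_iff v).mp hsv
    have hle : hammingNorm v ≤ n := by
      have := hammingNorm_le_card_fintype (x := v)
      simpa using this
    have hne : hammingNorm v ≠ 0 := fun h => hv (hammingNorm_eq_zero.mp h)
    obtain ⟨k, hk⟩ := hev
    rw [sInt_spec]
    have hcast : (hammingNorm v : ℤ) = 2 * k := by push_cast [hk]; ring
    rw [hcast]
    have : (2:ℤ) ≤ 2 * k := by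
      have : 1 ≤ k := by omega
      omega
    have hkn : 2 * (k:ℤ) ≤ (n:ℤ) := by exact_mod_cast hcast ▸ (Nat.cast_le.mpr hle)
    have h4 : (n:ℤ) % 4 = 1 := by exact_mod_cast hn4
    omega
  -- upper bound certificate
  have UBsum := EXP (-1) ((n:ℤ) - 6) (2*(n:ℤ) - 5) (-(3*(n:ℤ) - 12))
  have UBpt : ∀ v ∈ (Finset.univ : Finset (Fin n → ZMod 2)).erase 0,
      (0:ℤ) ≤ (S C v) ^ 2 * (1 + sgn v) *
        ((-1) * (sInt v)^3 + ((n:ℤ) - 6) * (sInt v)^2 + (2*(n:ℤ) - 5) * (sInt v) + (-(3*(n:ℤ) - 12))) := by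
    intro v hv
    have hv0 : v ≠ 0 := (Finset.mem_erase.mp hv).1
    rcases sgn_vals v with hs | hs
    · obtain ⟨h1, h2, h3⟩ := sfacts v hv0 hs
      have := cubic_ub (s := sInt v) (N := (n:ℤ)) hnz h1 h3
      have hpoly : (-1) * (sInt v)^3 + ((n:ℤ) - 6) * (sInt v)^2 + (2*(n:ℤ) - 5) * (sInt v) + (-(3*(n:ℤ) - 12))
          = -((sInt v - 1) * (sInt v + 3) * (sInt v - ((n:ℤ) - 4))) := by ring
      rw [hpoly, hs]
      exact mul_nonneg (mul_nonneg (sq_nonneg _) (by norm_num)) this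
    · rw [hs]
      simp
  have UBlow : (S C 0) ^ 2 * (1 + sgn (0 : Fin n → ZMod 2)) *
        ((-1) * (sInt (0 : Fin n → ZMod 2))^3 + ((n:ℤ) - 6) * (sInt (0 : Fin n → ZMod 2))^2
          + (2*(n:ℤ) - 5) * (sInt (0 : Fin n → ZMod 2)) + (-(3*(n:ℤ) - 12)))
      ≤ ∑ v : Fin n → ZMod 2,
        (S C v) ^ 2 * (1 + sgn v) *
          ((-1) * (sInt v)^3 + ((n:ℤ) - 6) * (sInt v)^2 + (2*(n:ℤ) - 5) * (sInt v) + (-(3*(n:ℤ) - 12))) := by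
    rw [← Finset.add_sum_erase _ _ (Finset.mem_univ (0 : Fin n → ZMod 2))]
    have := Finset.sum_nonneg UBpt
    linarith
  rw [UBsum, S_zero, sgn_zero, sInt_zero] at UBlow
  -- lower bound certificate
  have LBsum := EXP 1 (n:ℤ) (2*(n:ℤ) - 7) (-(3*(n:ℤ) - 6))
  have LBpt : ∀ v ∈ (Finset.univ : Finset (Fin n → ZMod 2)).erase 0,
      (0:ℤ) ≤ (S C v) ^ 2 * (1 + sgn v) *
        (1 * (sInt v)^3 + (n:ℤ) * (sInt v)^2 + (2*(n:ℤ) - 7) * (sInt v) + (-(3*(n:ℤ) - 6))) := by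
    intro v hv
    have hv0 : v ≠ 0 := (Finset.mem_erase.mp hv).1
    rcases sgn_vals v with hs | hs
    · obtain ⟨h1, h2, h3⟩ := sfacts v hv0 hs
      have := cubic_lb (s := sInt v) (N := (n:ℤ)) hnz h1 h2
      have hpoly : 1 * (sInt v)^3 + (n:ℤ) * (sInt v)^2 + (2*(n:ℤ) - 7) * (sInt v) + (-(3*(n:ℤ) - 6))
          = (sInt v - 1) * (sInt v + 3) * (sInt v + ((n:ℤ) - 2)) := by ring
      rw [hpoly, hs]
      exact mul_nonneg (mul_nonneg (sq_nonneg _) (by norm_num)) this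
    · rw [hs]
      simp
  have LBlow : (S C 0) ^ 2 * (1 + sgn (0 : Fin n → ZMod 2)) *
        (1 * (sInt (0 : Fin n → ZMod 2))^3 + (n:ℤ) * (sInt (0 : Fin n → ZMod 2))^2
          + (2*(n:ℤ) - 7) * (sInt (0 : Fin n → ZMod 2)) + (-(3*(n:ℤ) - 6)))
      ≤ ∑ v : Fin n → ZMod 2,
        (S C v) ^ 2 * (1 + sgn v) *
          (1 * (sInt v)^3 + (n:ℤ) * (sInt v)^2 + (2*(n:ℤ) - 7) * (sInt v) + (-(3*(n:ℤ) - 6))) := by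
    rw [← Finset.add_sum_erase _ _ (Finset.mem_univ (0 : Fin n → ZMod 2))]
    have := Finset.sum_nonneg LBpt
    linarith
  rw [LBsum, S_zero, sgn_zero, sInt_zero] at LBlow
  -- combine
  rw [hpow] at UBlow LBlow
  clear M00 M10 M20 M30 M01 M11 M21 M31 EXP UBpt LBpt UBsum LBsum sfacts z10 z30 z01 z21
  clear heven hdist
  have hcpos : (0:ℤ) < 2 * ((n:ℤ) + 3) * K := by positivity
  set E1 : ℤ := -N3 + ((n:ℤ) - 6) * ((n:ℤ) * K) + (2*(n:ℤ) - 5) * N1 + (-(3*(n:ℤ) - 12)) * K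
    with hE1
  have UB2 : (2 * ((n:ℤ) + 3) * K) * (-4 * ((n:ℤ) - 1) * K) ≤ (2 * ((n:ℤ) + 3) * K) * E1 := by
    have eL : (K:ℤ)^2 * (1 + 1) *
        ((-1) * ((n:ℤ))^3 + ((n:ℤ) - 6) * ((n:ℤ))^2 + (2*(n:ℤ) - 5) * (n:ℤ) + (-(3*(n:ℤ) - 12)))
        = (2 * ((n:ℤ) + 3) * K) * (-4 * ((n:ℤ) - 1) * K) := by ring
    have eR : (-1) * (0 + 2 * ((n:ℤ) + 3) * K * N3) + ((n:ℤ) - 6) * (2 * ((n:ℤ) + 3) * K * ((n:ℤ) * K) + 0)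
        + (2*(n:ℤ) - 5) * (0 + 2 * ((n:ℤ) + 3) * K * N1) + (-(3*(n:ℤ) - 12)) * (2 * ((n:ℤ) + 3) * K * K + 0)
        = (2 * ((n:ℤ) + 3) * K) * E1 := by rw [hE1]; ring
    linarith [UBlow, eL.ge, eL.le, eR.ge, eR.le]
  have hEub : -4 * ((n:ℤ) - 1) * K ≤ E1 := le_of_mul_le_mul_left UB2 hcpos
  set E2 : ℤ := N3 + (n:ℤ) * ((n:ℤ) * K) + (2*(n:ℤ) - 7) * N1 + (-(3*(n:ℤ) - 6)) * K with hE2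
  have LB2 : (2 * ((n:ℤ) + 3) * K) * (2 * ((n:ℤ) - 1)^2 * K) ≤ (2 * ((n:ℤ) + 3) * K) * E2 := by
    have eL : (K:ℤ)^2 * (1 + 1) *
        (1 * ((n:ℤ))^3 + (n:ℤ) * ((n:ℤ))^2 + (2*(n:ℤ) - 7) * (n:ℤ) + (-(3*(n:ℤ) - 6)))
        = (2 * ((n:ℤ) + 3) * K) * (2 * ((n:ℤ) - 1)^2 * K) := by ring
    have eR : 1 * (0 + 2 * ((n:ℤ) + 3) * K * N3) + (n:ℤ) * (2 * ((n:ℤ) + 3) * K * ((n:ℤ) * K) + 0)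
        + (2*(n:ℤ) - 7) * (0 + 2 * ((n:ℤ) + 3) * K * N1) + (-(3*(n:ℤ) - 6)) * (2 * ((n:ℤ) + 3) * K * K + 0)
        = (2 * ((n:ℤ) + 3) * K) * E2 := by rw [hE2]; ring
    linarith [LBlow, eL.ge, eL.le, eR.ge, eR.le]
  have hElb : 2 * ((n:ℤ) - 1)^2 * K ≤ E2 := le_of_mul_le_mul_left LB2 hcpos
  have hmul1 : (2*(n:ℤ) - 5) * N1 ≤ (2*(n:ℤ) - 5) * K :=
    mul_le_mul_of_nonneg_left hN1K (by linarith)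
  have hmul2 : (2*(n:ℤ) - 7) * N1 ≤ (2*(n:ℤ) - 7) * K :=
    mul_le_mul_of_nonneg_left hN1K (by linarith)
  have hub : N3 ≤ ((n:ℤ)^2 - 3*(n:ℤ) + 3) * K := by
    have hid : ((n:ℤ) - 6) * ((n:ℤ) * K) + (2*(n:ℤ) - 5) * K + (-(3*(n:ℤ) - 12)) * K
        + 4 * ((n:ℤ) - 1) * K = ((n:ℤ)^2 - 3*(n:ℤ) + 3) * K := by ring
    rw [hE1] at hEub
    linarith [hEub, hmul1, hid.le, hid.ge]
  have hlb : ((n:ℤ)^2 - 3*(n:ℤ) + 3) * K ≤ N3 := by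
    have hid : 2 * ((n:ℤ) - 1)^2 * K - (n:ℤ) * ((n:ℤ) * K) - (2*(n:ℤ) - 7) * K
        - (-(3*(n:ℤ) - 6)) * K = ((n:ℤ)^2 - 3*(n:ℤ) + 3) * K := by ring
    rw [hE2] at hElb
    linarith [hElb, hmul2, hid.le, hid.ge]
  omega


lemma hnorm_one {u : Fin n → ZMod 2} (h : hammingNorm u = 1) : ∃ k, u = ev k := by
  obtain ⟨k, hk⟩ := Finset.card_eq_one.mp h
  have hkmem : k ∈ ({i | u i ≠ 0} : Finset (Fin n)) := by rw [hk]; exact Finset.mem_singleton_self k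
  have hku : u k ≠ 0 := by simpa using hkmem
  refine ⟨k, funext fun l => ?_⟩
  by_cases hl : l = k
  · subst hl
    have : u l = 1 := by
      generalize u l = a at hku ⊢
      revert hku; revert a; decide
    rw [this]; simp [ev]
  · have : l ∉ ({i | u i ≠ 0} : Finset (Fin n)) := by
      rw [hk]; simp [hl]
    have hl0 : u l = 0 := by simpa using this
    rw [hl0]; simp [ev, hl]

lemma sgn_ev (i : Fin n) : sgn (ev i) = -1 := by
  rw [sgn_spec, hnorm_ev]; ring

lemma odd_add_cov {x : Fin n → ZMod 2} {c : Fin n → ZMod 2} {k : Fin n}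
    (hcev : Even (hammingNorm c)) (hx : x = c + ev k) : Odd (hammingNorm x) := by
  rw [← sgn_eq_neg_one_iff, hx, sgn_add, (sgn_eq_one_iff c).mpr hcev, sgn_ev]
  ring

lemma dist_parity {x c : Fin n → ZMod 2} (hx : Odd (hammingNorm x))
    (hc : Even (hammingNorm c)) : Odd (hammingDist x c) := by
  rw [hdist_eq, ← sgn_eq_neg_one_iff, sgn_add, (sgn_eq_neg_one_iff x).mpr hx,
    (sgn_eq_one_iff c).mpr hc]
  ring

lemma x_eq_cov {x c : Fin n → ZMod 2} {k : Fin n} (h : x + c = ev k) : x = c + ev k := by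
  have : x + c + c = ev k + c := by rw [h]
  rwa [add_assoc, add_self_zero, add_zero, add_comm (ev k) c] at this

lemma dist_cov {c : Fin n → ZMod 2} (k : Fin n) : hammingDist (c + ev k) c = 1 := by
  rw [hdist_eq, show c + ev k + c = ev k by
    rw [add_comm c (ev k), add_assoc, add_self_zero, add_zero], hnorm_ev]

lemma mem3 (heven : ∀ c ∈ C, Even (hammingNorm c)) {x : Fin n → ZMod 2}
    (hodd : Odd (hammingNorm x)) (h : ¬ ∃ c ∈ C, ∃ k, x = c + ev k) :
    ∀ c ∈ C, 3 ≤ hammingDist x c := by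
  intro c hc
  have hp : Odd (hammingDist x c) := dist_parity hodd (heven c hc)
  have hne1 : hammingDist x c ≠ 1 := by
    intro h1
    rw [hdist_eq] at h1
    obtain ⟨k, hk⟩ := hnorm_one h1
    exact h ⟨c, hc, k, x_eq_cov hk⟩
  obtain ⟨t, ht⟩ := hp
  omega

lemma cov_of_not_mem3 (heven : ∀ c ∈ C, Even (hammingNorm c)) {x : Fin n → ZMod 2}
    (hodd : Odd (hammingNorm x)) (hx : ¬ ∀ c ∈ C, 3 ≤ hammingDist x c) :
    ∃ c ∈ C, ∃ k, x = c + ev k := by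
  by_contra h
  exact hx (mem3 heven hodd h)


variable (C)

def EbarF : Finset (Fin n → ZMod 2) :=
  Finset.univ.filter (fun x => Odd (hammingNorm x) ∧ ∀ c ∈ C, 3 ≤ hammingDist x c)

def CovF : Finset (Fin n → ZMod 2) :=
  (C ×ˢ (Finset.univ : Finset (Fin n))).image (fun p => p.1 + ev p.2)

lemma mem_CovF {x : Fin n → ZMod 2} : x ∈ CovF C ↔ ∃ c ∈ C, ∃ k, x = c + ev k := by
  simp only [CovF, Finset.mem_image, Finset.mem_product, Finset.mem_univ, and_true,
    Prod.exists]
  constructor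
  · rintro ⟨c, k, hc, h⟩
    exact ⟨c, hc, k, h.symm⟩
  · rintro ⟨c, hc, k, h⟩
    exact ⟨c, k, hc, h.symm⟩

lemma CovF_card (hdist : ∀ c ∈ C, ∀ c' ∈ C, c ≠ c' → 4 ≤ hammingDist c c') :
    (CovF C).card = C.card * n := by
  rw [CovF, Finset.card_image_of_injOn, Finset.card_product, Finset.card_univ,
    Fintype.card_fin]
  rintro ⟨c, k⟩ hp ⟨c', k'⟩ hq h
  simp only [Finset.mem_coe, Finset.mem_product] at hp hq
  obtain ⟨h1, h2⟩ := cancel_pair hdist hp.1 hq.1 h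
  exact Prod.ext h1 h2

lemma CovF_not_Ebar {x : Fin n → ZMod 2} (hx : x ∈ CovF C) : x ∉ EbarF C := by
  obtain ⟨c, hc, k, hk⟩ := (mem_CovF C).mp hx
  intro hmem
  rw [EbarF, Finset.mem_filter] at hmem
  have := hmem.2.2 c hc
  rw [hk, dist_cov] at this
  omega

lemma Ebar_union (heven : ∀ c ∈ C, Even (hammingNorm c)) :
    EbarF C ∪ CovF C = Finset.univ.filter (fun x => Odd (hammingNorm x)) := by
  ext x
  simp only [Finset.mem_union, Finset.mem_filter, Finset.mem_univ, true_and]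
  constructor
  · rintro (h | h)
    · rw [EbarF, Finset.mem_filter] at h
      exact h.2.1
    · obtain ⟨c, hc, k, hk⟩ := (mem_CovF C).mp h
      exact odd_add_cov (heven c hc) hk
  · intro hodd
    by_cases hx : ∀ c ∈ C, 3 ≤ hammingDist x c
    · left
      rw [EbarF, Finset.mem_filter]
      exact ⟨Finset.mem_univ x, hodd, hx⟩
    · right
      exact (mem_CovF C).mpr (cov_of_not_mem3 heven hodd hx)

lemma odds_card (hnodd : Odd n) :
    (Finset.univ.filter (fun x : Fin n → ZMod 2 => Odd (hammingNorm x))).card * 2 = 2 ^ n := by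
  have flip : (Finset.univ.filter (fun x : Fin n → ZMod 2 => Odd (hammingNorm x))).card
      = (Finset.univ.filter (fun x : Fin n → ZMod 2 => ¬ Odd (hammingNorm x))).card := by
    apply Finset.card_bij (fun x _ => x + 1)
    · intro x hx
      simp only [Finset.mem_filter, Finset.mem_univ, true_and] at hx ⊢
      have := hnorm_add_one x
      obtain ⟨t, ht⟩ := hx
      obtain ⟨u, hu⟩ := hnodd
      rw [Nat.not_odd_iff_even]
      exact ⟨(hammingNorm (x + 1)) / 2, by omega⟩
    · intro x hx y hy h
      have : x + 1 + 1 = y + 1 + 1 := by rw [h]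
      rwa [add_assoc, add_self_zero, add_zero, add_assoc, add_self_zero, add_zero] at this
    · intro y hy
      refine ⟨y + 1, ?_, by rw [add_assoc, add_self_zero, add_zero]⟩
      simp only [Finset.mem_filter, Finset.mem_univ, true_and] at hy ⊢
      have := hnorm_add_one y
      rw [Nat.not_odd_iff_even] at hy
      obtain ⟨t, ht⟩ := hy
      obtain ⟨u, hu⟩ := hnodd
      exact ⟨(n - 2 * t - 1) / 2, by omega⟩
  have total := Finset.card_filter_add_card_filter_not
    (s := (Finset.univ : Finset (Fin n → ZMod 2)))
    (p := fun x => Odd (hammingNorm x))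
  rw [Finset.card_univ] at total
  have hcard : Fintype.card (Fin n → ZMod 2) = 2 ^ n := by
    rw [Fintype.card_fun, Fintype.card_fin]
    norm_num
  omega

lemma Ebar_card (heven : ∀ c ∈ C, Even (hammingNorm c))
    (hdist : ∀ c ∈ C, ∀ c' ∈ C, c ≠ c' → 4 ≤ hammingDist c c')
    (hnodd : Odd n) (hpow2 : 2 ^ n = 2 * ((n + 3) * C.card)) :
    (EbarF C).card = 3 * C.card := by
  have hdisj : Disjoint (EbarF C) (CovF C) :=
    Finset.disjoint_right.mpr (fun x hx => CovF_not_Ebar C hx)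
  have hunion := Ebar_union C heven
  have hcards : (EbarF C).card + (CovF C).card
      = (Finset.univ.filter (fun x : Fin n → ZMod 2 => Odd (hammingNorm x))).card := by
    rw [← Finset.card_union_of_disjoint hdisj, hunion]
  have hodds := odds_card (n := n) hnodd
  rw [CovF_card C hdist] at hcards
  have hOdd : (Finset.univ.filter (fun x : Fin n → ZMod 2 => Odd (hammingNorm x))).card
      = (n + 3) * C.card := by omega
  rw [hOdd] at hcards
  have hexp : (n + 3) * C.card = C.card * n + 3 * C.card := by ring
  omega


def EfilF : Finset (Fin n → ZMod 2) :=
  Finset.univ.filter (fun x => Even (hammingNorm x) ∧ ∀ c ∈ C, 3 ≤ hammingDist x (c + 1))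

lemma add_one_one (z : Fin n → ZMod 2) : z + 1 + 1 = z := by
  rw [add_assoc, add_self_zero, add_zero]

lemma dist_add_one (x y : Fin n → ZMod 2) :
    hammingDist x (y + 1) + hammingDist x y = n := by
  rw [hdist_eq, hdist_eq, show x + (y + 1) = (x + y) + 1 by ring]
  exact hnorm_add_one (x + y)

lemma mem_EfilF_iff (hnodd : Odd n) {y : Fin n → ZMod 2} :
    y ∈ EfilF C ↔ y + 1 ∈ EbarF C := by
  rw [EfilF, EbarF, Finset.mem_filter, Finset.mem_filter]
  simp only [Finset.mem_univ, true_and]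
  constructor
  · rintro ⟨hev, hd⟩
    constructor
    · have := hnorm_add_one y
      obtain ⟨t, ht⟩ := hev
      obtain ⟨u, hu⟩ := hnodd
      exact ⟨(n - 1) / 2 - t + (hammingNorm (y+1) + 2*t - n) / 2, by omega⟩
    · intro c hc
      have := hd c hc
      rwa [hdist_eq, show y + (c + 1) = (y + 1) + c by ring, ← hdist_eq] at this
  · rintro ⟨hodd, hd⟩
    constructor
    · have := hnorm_add_one y
      obtain ⟨t, ht⟩ := hodd
      obtain ⟨u, hu⟩ := hnodd
      exact ⟨(n - (2*t+1)) / 2, by omega⟩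
    · intro c hc
      have := hd c hc
      rwa [hdist_eq, show (y + 1) + c = y + (c + 1) by ring, ← hdist_eq] at this

lemma step1 (hnodd : Odd n) (hn1 : 1 ≤ n) :
    ((EbarF C ×ˢ EfilF C).filter (fun p => hammingDist p.1 p.2 = 1)).card
    = ((EbarF C ×ˢ EbarF C).filter (fun p => hammingDist p.1 p.2 = n - 1)).card := by
  apply Finset.card_bij (fun p _ => (p.1, p.2 + 1))
  · rintro ⟨x, y⟩ hp
    simp only [Finset.mem_filter, Finset.mem_product] at hp ⊢
    obtain ⟨⟨h1, h2⟩, h3⟩ := hp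
    refine ⟨⟨h1, (mem_EfilF_iff C hnodd).mp h2⟩, ?_⟩
    have := dist_add_one x y
    omega
  · rintro ⟨x, y⟩ _ ⟨x', y'⟩ _ h
    simp only [Prod.mk.injEq] at h
    obtain ⟨h1, h2⟩ := h
    have : y + 1 + 1 = y' + 1 + 1 := by rw [h2]
    rw [add_one_one, add_one_one] at this
    exact Prod.ext h1 this
  · rintro ⟨x, z⟩ hp
    simp only [Finset.mem_filter, Finset.mem_product] at hp
    obtain ⟨⟨h1, h2⟩, h3⟩ := hp
    refine ⟨(x, z + 1), ?_, ?_⟩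
    · simp only [Finset.mem_filter, Finset.mem_product]
      refine ⟨⟨h1, (mem_EfilF_iff C hnodd).mpr (by rw [add_one_one]; exact h2)⟩, ?_⟩
      have := dist_add_one x z
      omega
    · exact Prod.ext rfl (add_one_one z)

lemma step2 (hn1 : 1 ≤ n) :
    ((EbarF C ×ˢ EbarF C).filter (fun p => hammingDist p.1 p.2 = n - 1)).card
    = ((EbarF C ×ˢ (Finset.univ : Finset (Fin n))).filter
        (fun p => p.1 + 1 + ev p.2 ∈ EbarF C)).card := by
  symm
  apply Finset.card_bij (fun p _ => (p.1, p.1 + 1 + ev p.2))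
  · rintro ⟨x, i⟩ hp
    simp only [Finset.mem_filter, Finset.mem_product, Finset.mem_univ, and_true] at hp ⊢
    obtain ⟨h1, h2⟩ := hp
    refine ⟨⟨h1, h2⟩, ?_⟩
    have hx : x + (x + 1 + ev i) = ev i + 1 := by
      have h3 : x + (x + 1 + ev i) = (x + x) + (1 + ev i) := by ring
      rw [h3, add_self_zero, zero_add, add_comm]
    rw [hdist_eq, hx]
    have h4 := hnorm_add_one (ev i)
    rw [hnorm_ev] at h4
    omega
  · rintro ⟨x, i⟩ _ ⟨x', i'⟩ _ h
    simp only [Prod.mk.injEq] at h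
    obtain ⟨h1, h2⟩ := h
    subst h1
    refine Prod.ext rfl (ev_inj (add_left_cancel h2))
  · rintro ⟨x, z⟩ hp
    simp only [Finset.mem_filter, Finset.mem_product] at hp
    obtain ⟨⟨h1, h2⟩, h3⟩ := hp
    rw [hdist_eq] at h3
    have h4 := hnorm_add_one (x + z)
    have h5 : hammingNorm (x + z + 1) = 1 := by omega
    obtain ⟨k, hk⟩ := hnorm_one h5
    have h6 : x + 1 + ev k = z := by
      rw [← hk]
      have : x + 1 + (x + z + 1) = z + (x + x) + (1 + 1) := by ring
      rw [this, add_self_zero, add_self_zero, add_zero, add_zero]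
    refine ⟨(x, k), ?_, ?_⟩
    · simp only [Finset.mem_filter, Finset.mem_product, Finset.mem_univ, and_true]
      rw [h6]
      exact ⟨h1, h2⟩
    · exact Prod.ext rfl h6


lemma step3 :
    ((EbarF C ×ˢ (Finset.univ : Finset (Fin n))).filter
        (fun p => p.1 + 1 + ev p.2 ∈ EbarF C)).card
    + ((EbarF C ×ˢ (Finset.univ : Finset (Fin n))).filter
        (fun p => ¬ (p.1 + 1 + ev p.2 ∈ EbarF C))).card
    = (EbarF C).card * n := by
  rw [Finset.card_filter_add_card_filter_not, Finset.card_product, Finset.card_univ,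
    Fintype.card_fin]

lemma compute1 (c : Fin n → ZMod 2) (i k : Fin n) :
    (c + 1 + ev i + ev k) + 1 + ev i = c + ev k := by
  have h : (c + 1 + ev i + ev k) + 1 + ev i = c + ev k + (1 + 1) + (ev i + ev i) := by ring
  rw [h, add_self_zero, add_self_zero, add_zero, add_zero]

lemma not_mem_Ebar_cov {c : Fin n → ZMod 2} (hc : c ∈ C) (k : Fin n) :
    c + ev k ∉ EbarF C := by
  intro hmem
  rw [EbarF, Finset.mem_filter] at hmem
  have := hmem.2.2 c hc
  rw [dist_cov] at this
  omega

lemma odd_of_mem_Ebar {x : Fin n → ZMod 2} (hx : x ∈ EbarF C) : Odd (hammingNorm x) := by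
  rw [EbarF, Finset.mem_filter] at hx
  exact hx.2.1

lemma ebar_or_cov (heven : ∀ c ∈ C, Even (hammingNorm c)) {z : Fin n → ZMod 2}
    (hodd : Odd (hammingNorm z)) (hz : z ∉ EbarF C) : ∃ c ∈ C, ∃ k, z = c + ev k := by
  apply cov_of_not_mem3 heven hodd
  intro hall
  exact hz (by rw [EbarF, Finset.mem_filter]; exact ⟨Finset.mem_univ z, hodd, hall⟩)

lemma step4 (heven : ∀ c ∈ C, Even (hammingNorm c))
    (hdist : ∀ c ∈ C, ∀ c' ∈ C, c ≠ c' → 4 ≤ hammingDist c c') (hnodd : Odd n) :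
    ((EbarF C ×ˢ (Finset.univ : Finset (Fin n))).filter
        (fun p => ¬ (p.1 + 1 + ev p.2 ∈ EbarF C))).card
    = ((C ×ˢ ((Finset.univ : Finset (Fin n)) ×ˢ (Finset.univ : Finset (Fin n)))).filter
        (fun q => q.1 + 1 + ev q.2.1 + ev q.2.2 ∈ EbarF C)).card := by
  symm
  apply Finset.card_bij (fun q _ => (q.1 + 1 + ev q.2.1 + ev q.2.2, q.2.1))
  · rintro ⟨c, i, k⟩ hq
    simp only [Finset.mem_filter, Finset.mem_product, Finset.mem_univ, and_true] at hq ⊢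
    obtain ⟨hc, hx⟩ := hq
    refine ⟨hx, ?_⟩
    rw [compute1]
    exact not_mem_Ebar_cov C hc k
  · rintro ⟨c, i, k⟩ hq ⟨c', i', k'⟩ hq' h
    simp only [Finset.mem_filter, Finset.mem_product, Finset.mem_univ, and_true] at hq hq'
    simp only [Prod.mk.injEq] at h
    obtain ⟨h1, h2⟩ := h
    subst h2
    have h3 : c + ev k + (1 + ev i) = c' + ev k' + (1 + ev i) := by
      have e1 : c + ev k + (1 + ev i) = c + 1 + ev i + ev k := by ring
      have e2 : c' + ev k' + (1 + ev i) = c' + 1 + ev i + ev k' := by ring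
      rw [e1, e2, h1]
    obtain ⟨h4, h5⟩ := cancel_pair hdist hq.1 hq'.1 (add_right_cancel h3)
    rw [h4, h5]
  · rintro ⟨x, i⟩ hp
    simp only [Finset.mem_filter, Finset.mem_product, Finset.mem_univ, and_true] at hp
    obtain ⟨h1, h2⟩ := hp
    have hxodd : Odd (hammingNorm x) := odd_of_mem_Ebar C h1
    have hzodd : Odd (hammingNorm (x + 1 + ev i)) := by
      rw [← sgn_eq_neg_one_iff, sgn_add, sgn_add, (sgn_eq_neg_one_iff x).mpr hxodd,
        sgn_one' hnodd, sgn_ev]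
      ring
    obtain ⟨c, hc, k, hk⟩ := ebar_or_cov C heven hzodd h2
    refine ⟨(c, i, k), ?_, ?_⟩
    · simp only [Finset.mem_filter, Finset.mem_product, Finset.mem_univ, and_true]
      refine ⟨hc, ?_⟩
      have hxx : c + 1 + ev i + ev k = x := by
        have e1 : c + 1 + ev i + ev k = (c + ev k) + 1 + ev i := by ring
        rw [e1, ← hk]
        have e2 : x + 1 + ev i + 1 + ev i = x + (1 + 1) + (ev i + ev i) := by ring
        rw [e2, add_self_zero, add_self_zero, add_zero, add_zero]
      rw [hxx]
      exact h1
    · have hxx : c + 1 + ev i + ev k = x := by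
        have e1 : c + 1 + ev i + ev k = (c + ev k) + 1 + ev i := by ring
        rw [e1, ← hk]
        have e2 : x + 1 + ev i + 1 + ev i = x + (1 + 1) + (ev i + ev i) := by ring
        rw [e2, add_self_zero, add_self_zero, add_zero, add_zero]
      exact Prod.ext hxx rfl


lemma step5b (heven : ∀ c ∈ C, Even (hammingNorm c))
    (hdist : ∀ c ∈ C, ∀ c' ∈ C, c ≠ c' → 4 ≤ hammingDist c c') (hnodd : Odd n) :
    ((C ×ˢ ((Finset.univ : Finset (Fin n)) ×ˢ (Finset.univ : Finset (Fin n)))).filter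
        (fun q => ¬ (q.1 + 1 + ev q.2.1 + ev q.2.2 ∈ EbarF C))).card = cnt C 3 1 := by
  symm
  rw [cnt]
  apply Finset.card_bij (fun p _ => (p.1.1, p.2 0, p.2 1))
  · rintro ⟨⟨c, c'⟩, g⟩ hp
    simp only [Finset.mem_filter, Finset.mem_product, Finset.mem_univ, and_true] at hp ⊢
    obtain ⟨⟨hc, hc'⟩, hcond⟩ := hp
    rw [Fin.sum_univ_three] at hcond
    have hx : c + 1 + ev (g 0) + ev (g 1) = c' + ev (g 2) := by
      apply eq_of_add_eq_zero
      have e1 : c + 1 + ev (g 0) + ev (g 1) + (c' + ev (g 2))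
          = c + c' + 1 + (ev (g 0) + ev (g 1) + ev (g 2)) := by ring
      rw [e1, hcond]
    refine ⟨hc, ?_⟩
    rw [hx]
    exact not_mem_Ebar_cov C hc' (g 2)
  · rintro ⟨⟨c, c'⟩, g⟩ hp ⟨⟨d, d'⟩, g'⟩ hq h
    simp only [Finset.mem_filter, Finset.mem_product, Finset.mem_univ, and_true] at hp hq
    simp only [Prod.mk.injEq] at h
    obtain ⟨h1, h2, h3⟩ := h
    subst h1
    obtain ⟨⟨hc, hc'⟩, hcond⟩ := hp
    obtain ⟨⟨hd, hd'⟩, hcond'⟩ := hq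
    rw [Fin.sum_univ_three] at hcond hcond'
    have hx : c + 1 + ev (g 0) + ev (g 1) = c' + ev (g 2) := by
      apply eq_of_add_eq_zero
      have e1 : c + 1 + ev (g 0) + ev (g 1) + (c' + ev (g 2))
          = c + c' + 1 + (ev (g 0) + ev (g 1) + ev (g 2)) := by ring
      rw [e1, hcond]
    have hx' : c + 1 + ev (g' 0) + ev (g' 1) = d' + ev (g' 2) := by
      apply eq_of_add_eq_zero
      have e1 : c + 1 + ev (g' 0) + ev (g' 1) + (d' + ev (g' 2))
          = c + d' + 1 + (ev (g' 0) + ev (g' 1) + ev (g' 2)) := by ring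
      rw [e1, hcond']
    rw [← h2, ← h3] at hx'
    obtain ⟨h4, h5⟩ := cancel_pair hdist hc' hd' (hx.symm.trans hx')
    refine Prod.ext (Prod.ext rfl h4) ?_
    funext r
    fin_cases r
    · exact h2
    · exact h3
    · exact h5
  · rintro ⟨c, i, k⟩ hp
    simp only [Finset.mem_filter, Finset.mem_product, Finset.mem_univ, and_true] at hp
    obtain ⟨hc, hz⟩ := hp
    have hxodd : Odd (hammingNorm (c + 1 + ev i + ev k)) := by
      rw [← sgn_eq_neg_one_iff, sgn_add, sgn_add, sgn_add, sgn_mem heven hc,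
        sgn_one' hnodd, sgn_ev, sgn_ev]
      ring
    obtain ⟨c', hc', l, hl⟩ := ebar_or_cov C heven hxodd hz
    refine ⟨((c, c'), fun r => if r = 0 then i else if r = 1 then k else l), ?_, ?_⟩
    · simp only [Finset.mem_filter, Finset.mem_product, Finset.mem_univ, and_true]
      refine ⟨⟨hc, hc'⟩, ?_⟩
      rw [Fin.sum_univ_three]
      have g0 : (if (0 : Fin 3) = 0 then i else if (0 : Fin 3) = 1 then k else l) = i :=
        if_pos rfl
      have g1 : (if (1 : Fin 3) = 0 then i else if (1 : Fin 3) = 1 then k else l) = k := by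
        rw [if_neg (by decide : ¬((1 : Fin 3) = 0)), if_pos rfl]
      have g2 : (if (2 : Fin 3) = 0 then i else if (2 : Fin 3) = 1 then k else l) = l := by
        rw [if_neg (by decide : ¬((2 : Fin 3) = 0)), if_neg (by decide : ¬((2 : Fin 3) = 1))]
      rw [g0, g1, g2]
      have e1 : c + c' + 1 + (ev i + ev k + ev l)
          = (c + 1 + ev i + ev k) + (c' + ev l) := by ring
      rw [e1, ← hl, add_self_zero]
    · have g0 : (if (0 : Fin 3) = 0 then i else if (0 : Fin 3) = 1 then k else l) = i :=
        if_pos rfl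
      have g1 : (if (1 : Fin 3) = 0 then i else if (1 : Fin 3) = 1 then k else l) = k := by
        rw [if_neg (by decide : ¬((1 : Fin 3) = 0)), if_pos rfl]
      exact Prod.ext rfl (Prod.ext g0 g1)

lemma step5 (heven : ∀ c ∈ C, Even (hammingNorm c))
    (hdist : ∀ c ∈ C, ∀ c' ∈ C, c ≠ c' → 4 ≤ hammingDist c c') (hnodd : Odd n) :
    ((C ×ˢ ((Finset.univ : Finset (Fin n)) ×ˢ (Finset.univ : Finset (Fin n)))).filter
        (fun q => q.1 + 1 + ev q.2.1 + ev q.2.2 ∈ EbarF C)).card + cnt C 3 1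
      = C.card * (n * n) := by
  rw [← step5b C heven hdist hnodd,
    Finset.card_filter_add_card_filter_not, Finset.card_product,
    Finset.card_product, Finset.card_univ, Fintype.card_fin]

lemma main_count (heven : ∀ c ∈ C, Even (hammingNorm c))
    (hdist : ∀ c ∈ C, ∀ c' ∈ C, c ≠ c' → 4 ≤ hammingDist c c') (hnodd : Odd n)
    (hn1 : 1 ≤ n)
    (hpow2 : 2 ^ n = 2 * ((n + 3) * C.card))
    (hQ3 : cnt C 3 1 + 3 * (n * C.card) = n * n * C.card + 3 * C.card) :
    ((EbarF C ×ˢ EfilF C).filter (fun p => hammingDist p.1 p.2 = 1)).card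
      = (EbarF C).card := by
  have e1 := step1 C hnodd hn1
  have e2 := step2 C hn1
  have e3 := step3 C
  have e4 := step4 C heven hdist hnodd
  have e5 := step5 C heven hdist hnodd
  have ecard := Ebar_card C heven hdist hnodd hpow2
  rw [ecard] at e3 ⊢
  rw [e1, e2]
  rw [e4] at e3
  -- A := goal LHS
  nlinarith [e3, e5, hQ3]

end Code


lemma m_le_pow (m : ℕ) (hm : 4 ≤ m) : m + 4 ≤ 2 ^ m := by
  induction m with
  | zero => omega
  | succ k ih =>
      rcases Nat.lt_or_ge k 4 with h | h
      · interval_cases k <;> simp_all <;> omega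
      · have := ih (by omega)
        have h2 : 2 ^ (k + 1) = 2 * 2 ^ k := by ring
        omega

end Stmt16Aux

open Stmt16Aux in
theorem stmt16 (m : ℕ) (hm : 4 ≤ m)
    (C : Finset (Fin (2 ^ m - 3) → ZMod 2))
    (hcard : C.card = 2 ^ (2 ^ m - m - 4))
    (heven : ∀ c ∈ C, Even (hammingNorm c))
    (hdist : ∀ c ∈ C, ∀ c' ∈ C, c ≠ c' → 4 ≤ hammingDist c c') :
    (((Finset.univ.filter fun x : Fin (2 ^ m - 3) → ZMod 2 =>
          Odd (hammingNorm x) ∧ ∀ c ∈ C, 3 ≤ hammingDist x c) ×ˢ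
        (Finset.univ.filter fun x : Fin (2 ^ m - 3) → ZMod 2 =>
          Even (hammingNorm x) ∧ ∀ c ∈ C, 3 ≤ hammingDist x (c + 1))).filter
        fun p => hammingDist p.1 p.2 = 1).card =
      (Finset.univ.filter fun x : Fin (2 ^ m - 3) → ZMod 2 =>
        Odd (hammingNorm x) ∧ ∀ c ∈ C, 3 ≤ hammingDist x c).card := by
  have h16 : 16 ≤ 2 ^ m := by
    calc (16 : ℕ) = 2 ^ 4 := by norm_num
    _ ≤ 2 ^ m := Nat.pow_le_pow_right (by norm_num) hm
  have hmle : m + 4 ≤ 2 ^ m := m_le_pow m hm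
  have h16' : ∃ j, 2 ^ m = 16 * j := by
    refine ⟨2 ^ (m - 4), ?_⟩
    have : 2 ^ m = 2 ^ 4 * 2 ^ (m - 4) := by
      rw [← pow_add]
      congr 1
      omega
    omega
  obtain ⟨j, hj⟩ := h16'
  have hn13 : 13 ≤ 2 ^ m - 3 := by omega
  have hn4 : (2 ^ m - 3) % 4 = 1 := by omega
  have hnodd : Odd (2 ^ m - 3) := ⟨(2 ^ m - 4) / 2, by omega⟩
  have hn1 : 1 ≤ 2 ^ m - 3 := by omega
  have hKpos : 0 < C.card := by rw [hcard]; positivity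
  have hpow2 : 2 ^ (2 ^ m - 3) = 2 * (((2 ^ m - 3) + 3) * C.card) := by
    rw [hcard]
    have he : 2 ^ m - 3 = 1 + m + (2 ^ m - m - 4) := by omega
    have hn3 : (2 ^ m - 3) + 3 = 2 ^ m := by omega
    rw [hn3]
    conv_lhs => rw [he]
    rw [pow_add, pow_add]
    ring
  have hpowZ : (2:ℤ) ^ (2 ^ m - 3) = 2 * (((2 ^ m - 3 : ℕ) : ℤ) + 3) * (C.card : ℤ) := by
    have h2 : ((2 ^ (2 ^ m - 3) : ℕ) : ℤ) = ((2 * (((2 ^ m - 3) + 3) * C.card) : ℕ) : ℤ) := by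
      exact_mod_cast congrArg (Nat.cast : ℕ → ℤ) hpow2
    push_cast at h2
    linarith
  have hQ3Z := Q3_eq (C := C) hn13 hn4 heven hdist hpowZ hKpos
  have hQ3 : cnt C 3 1 + 3 * ((2 ^ m - 3) * C.card)
      = (2 ^ m - 3) * (2 ^ m - 3) * C.card + 3 * C.card := by
    have hcast : ((cnt C 3 1 + 3 * ((2 ^ m - 3) * C.card) : ℕ) : ℤ)
        = (((2 ^ m - 3) * (2 ^ m - 3) * C.card + 3 * C.card : ℕ) : ℤ) := by
      push_cast
      rw [hQ3Z]
      ring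
    exact_mod_cast hcast
  exact main_count C heven hdist hnodd hn1 hpow2 hQ3
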